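/- Let n ≥ 1 and let λ be a Lyndon word over Σ of length d, where d divides n. Then the number of words x of length n over Σ with minrot(x) = λ^(n/d) is exactly d. -/

import Mathlib

namespace Lyndon

variable {α : Type*}

/-- `rot w c` is the cyclic rotation of `w` obtained by moving its first `c mod |w|`
letters to the end. -/
def rot (w : List α) (c : ℕ) : List α :=
  w.drop (c % w.length) ++ w.take (c % w.length)

/-- `power w k` is the concatenation of `k` copies of `w`. -/
def power (w : List α) (k : ℕ) : List α := (List.replicate k w).flatten

/-- `minrot w` is the lexicographically minimal cyclic rotation of `w`. -/
def minrot [LinearOrder α] (w : List α) : List α :=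
  ((List.range w.length).map (rot w)).foldr min w

/-- A word is self-minimal if it equals its minimal cyclic rotation. -/
def SelfMinimal [LinearOrder α] (w : List α) : Prop := minrot w = w

/-- A word is primitive if it is a `k`-th power (for a positive integer `k`)
only of itself. -/
def Primitive (w : List α) : Prop :=
  ∀ (u : List α) (k : ℕ), 0 < k → w = power u k → u = w

/-- A Lyndon word is a nonempty word that is primitive and self-minimal. -/
def IsLyndon [LinearOrder α] (w : List α) : Prop :=
  w ≠ [] ∧ Primitive w ∧ SelfMinimal w

/-- `Pref₋(w)`: the words `w_(i)·s` for `0 ≤ i ≤ n-1` and a letter `s < w[i+1]`,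
together with `w` itself. -/
def PrefMinus [LinearOrder α] (w : List α) : Set (List α) :=
  {y | (∃ i : Fin w.length, ∃ s : α, s < w.get i ∧ y = w.take i ++ [s]) ∨ y = w}

/-- `L(w)`: the words containing a factor (contiguous subword) from `Pref₋(w)`. -/
def InL [LinearOrder α] (w x : List α) : Prop :=
  ∃ y ∈ PrefMinus w, y <:+: x

/- ### basic rot lemmas -/

lemma rot_nil (c : ℕ) : rot ([] : List α) c = [] := by simp [rot]

lemma rot_eq_rotate (w : List α) (c : ℕ) : rot w c = w.rotate c := by
  rcases eq_or_ne w [] with rfl | h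
  · simp [rot]
  · rw [rot, ← List.rotate_mod,
      List.rotate_eq_drop_append_take (le_of_lt (Nat.mod_lt _ (List.length_pos_iff.2 h)))]

lemma length_rot (w : List α) (c : ℕ) : (rot w c).length = w.length := by
  rw [rot_eq_rotate]; exact List.length_rotate w c

lemma rot_rot (w : List α) (a b : ℕ) : rot (rot w a) b = rot w (a + b) := by
  simp [rot_eq_rotate, List.rotate_rotate]

lemma rot_zero (w : List α) : rot w 0 = w := by simp [rot]

lemma rot_congr (w : List α) {a b : ℕ} (h : a % w.length = b % w.length) :
    rot w a = rot w b := by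
  unfold rot; rw [h]

lemma rot_mod (w : List α) (c : ℕ) : rot w (c % w.length) = rot w c :=
  rot_congr w (Nat.mod_mod_of_dvd c dvd_rfl)

lemma rot_length_dvd (w : List α) {c : ℕ} (h : w.length ∣ c) : rot w c = w := by
  unfold rot; rw [Nat.mod_eq_zero_of_dvd h]; simp

/- ### foldr min -/

lemma foldr_min_le_init {β : Type*} [LinearOrder β] (b : β) (L : List β) :
    L.foldr min b ≤ b := by
  induction L with
  | nil => simp
  | cons a L ih => exact le_trans (min_le_right _ _) ih

lemma foldr_min_le_mem {β : Type*} [LinearOrder β] {b a : β} {L : List β} (h : a ∈ L) :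
    L.foldr min b ≤ a := by
  induction L with
  | nil => simp at h
  | cons c L ih =>
    rcases List.mem_cons.1 h with rfl | h
    · exact min_le_left _ _
    · exact le_trans (min_le_right _ _) (ih h)

lemma foldr_min_mem {β : Type*} [LinearOrder β] (b : β) (L : List β) :
    L.foldr min b = b ∨ L.foldr min b ∈ L := by
  induction L with
  | nil => left; rfl
  | cons c L ih =>
    rcases le_total c (L.foldr min b) with h | h
    · right; simp [List.foldr_cons, min_eq_left h]
    · rcases ih with h2 | h2
      · left; simpa [List.foldr_cons, min_eq_right h] using h2
      · right; simp only [List.foldr_cons, min_eq_right h]; exact List.mem_cons_of_mem _ h2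

/- ### minrot -/

lemma minrot_le_rot [LinearOrder α] (w : List α) (c : ℕ) : minrot w ≤ rot w c := by
  rcases eq_or_ne w [] with rfl | h
  · simp [minrot, rot_nil]
  · have hpos : 0 < w.length := List.length_pos_iff.2 h
    have : rot w (c % w.length) ∈ (List.range w.length).map (rot w) :=
      List.mem_map_of_mem (List.mem_range.2 (Nat.mod_lt _ hpos))
    rw [rot_mod] at this
    exact foldr_min_le_mem this

lemma minrot_le_self [LinearOrder α] (w : List α) : minrot w ≤ w :=
  foldr_min_le_init _ _

lemma exists_minrot_eq_rot [LinearOrder α] (w : List α) : ∃ c, minrot w = rot w c := by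
  rcases foldr_min_mem w ((List.range w.length).map (rot w)) with h | h
  · exact ⟨0, by rw [minrot, h, rot_zero]⟩
  · rcases List.mem_map.1 h with ⟨c, _, hc⟩
    exact ⟨c, hc.symm⟩

lemma exists_rot_inv (w : List α) (a : ℕ) : ∃ b, rot (rot w a) b = w := by
  rcases eq_or_ne w [] with rfl | h
  · exact ⟨0, by simp [rot_nil]⟩
  · have hpos : 0 < w.length := List.length_pos_iff.2 h
    refine ⟨w.length - a % w.length, ?_⟩
    rw [rot_rot]
    apply rot_length_dvd
    have : a % w.length ≤ w.length := le_of_lt (Nat.mod_lt _ hpos)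
    have h1 : a + (w.length - a % w.length) = w.length * (a / w.length) + w.length := by
      have := Nat.mod_add_div a w.length
      omega
    rw [h1]
    exact Dvd.dvd.add (Dvd.intro _ rfl) dvd_rfl

lemma minrot_rot [LinearOrder α] (w : List α) (a : ℕ) : minrot (rot w a) = minrot w := by
  apply le_antisymm
  · obtain ⟨c, hc⟩ := exists_minrot_eq_rot w
    obtain ⟨b, hb⟩ := exists_rot_inv w a
    have : rot (rot w a) (b + c) = rot w c := by rw [← rot_rot, hb]
    rw [hc, ← this]
    exact minrot_le_rot _ _
  · obtain ⟨c, hc⟩ := exists_minrot_eq_rot (rot w a)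
    rw [hc, rot_rot]
    exact minrot_le_rot _ _

/- ### power -/

lemma power_zero (l : List α) : power l 0 = [] := rfl

lemma power_succ (l : List α) (k : ℕ) : power l (k + 1) = l ++ power l k := by
  simp [power, List.replicate_succ]

lemma power_one (l : List α) : power l 1 = l := by simp [power_succ, power_zero]

lemma power_add (l : List α) (a b : ℕ) : power l (a + b) = power l a ++ power l b := by
  induction a with
  | zero => simp [power_zero]
  | succ a ih => rw [Nat.succ_add, power_succ, power_succ, ih, List.append_assoc]

lemma power_succ' (l : List α) (k : ℕ) : power l (k + 1) = power l k ++ l := by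
  rw [power_add, power_one]

lemma length_power (l : List α) (k : ℕ) : (power l k).length = k * l.length := by
  induction k with
  | zero => simp [power_zero]
  | succ k ih => rw [power_succ, List.length_append, ih]; ring

lemma rot_power_length (l : List α) (m : ℕ) (hm : 1 ≤ m) :
    rot (power l m) l.length = power l m := by
  obtain ⟨m, rfl⟩ := Nat.exists_eq_add_of_le hm
  rcases eq_or_ne l [] with rfl | h
  · simp [power, rot_nil, List.flatten_replicate_nil]
  · have hd : 0 < l.length := List.length_pos_iff.2 h
    have hle : l.length ≤ (power l (1 + m)).length := by
      rw [length_power]; nlinarith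
    rw [rot_eq_rotate, List.rotate_eq_drop_append_take hle]
    have h1 : power l (1 + m) = l ++ power l m := by rw [power_add, power_one]
    rw [h1, List.drop_left, List.take_left, ← power_succ', Nat.add_comm]
    exact h1

lemma power_nil (m : ℕ) : power ([] : List α) m = [] := by
  induction m with
  | zero => rfl
  | succ m ih => rw [power_succ, ih]; rfl

lemma rot_power_dvd (l : List α) (m : ℕ) {c : ℕ} (hc : l.length ∣ c) :
    rot (power l m) c = power l m := by
  rcases eq_or_ne l [] with rfl | h
  · rw [power_nil, rot_nil]
  rcases Nat.eq_zero_or_pos m with rfl | hm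
  · rw [power_zero, rot_nil]
  obtain ⟨q, rfl⟩ := hc
  induction q with
  | zero => simpa using rot_zero _
  | succ q ih =>
    rw [Nat.mul_succ, ← rot_rot, ih, rot_power_length l m hm]

lemma rot_power_mod (l : List α) (m c : ℕ) :
    rot (power l m) c = rot (power l m) (c % l.length) := by
  rcases eq_or_ne l [] with rfl | h
  · rw [power_nil, rot_nil, rot_nil]
  conv_lhs => rw [← Nat.div_add_mod c l.length]
  rw [← rot_rot, rot_power_dvd l m (Dvd.intro _ rfl)]

lemma power_conj (u v : List α) (m : ℕ) :
    power (v ++ u) (m + 1) = v ++ power (u ++ v) m ++ u := by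
  induction m with
  | zero => simp [power_one, power_zero]
  | succ m ih =>
    rw [power_succ, ih, power_succ]
    simp [List.append_assoc]

lemma rot_power_lt (l : List α) (m : ℕ) (hm : 1 ≤ m) {r : ℕ} (hr : r < l.length) :
    rot (power l m) r = power (rot l r) m := by
  obtain ⟨m, rfl⟩ := Nat.exists_eq_add_of_le hm
  have hrl : r % l.length = r := Nat.mod_eq_of_lt hr
  have hrw : r % (power l (1 + m)).length = r := by
    apply Nat.mod_eq_of_lt
    rw [length_power]
    calc r < l.length := hr
    _ ≤ (1 + m) * l.length := Nat.le_mul_of_pos_left _ (by omega)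
  rw [rot, hrw, rot, hrl]
  have h1 : power l (1 + m) = l ++ power l m := by rw [power_add, power_one]
  rw [h1, List.drop_append_of_le_length (le_of_lt hr),
    List.take_append_of_le_length (le_of_lt hr)]
  rw [Nat.add_comm 1 m, power_conj, List.take_append_drop]

/- ### lex -/

lemma lex_append {a b : List α} {r : α → α → Prop} (h : a.length = b.length)
    (hab : List.Lex r a b) (x y : List α) : List.Lex r (a ++ x) (b ++ y) := by
  induction hab generalizing x y with
  | nil => simp at h
  | @rel a l₁ b l₂ hr => exact List.Lex.rel hr
  | @cons a l₁ l₂ _ ih =>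
    exact List.Lex.cons (ih (by simpa using h) x y)

lemma power_le_power [LinearOrder α] {a b : List α} (h : a.length = b.length)
    (hab : a ≤ b) (m : ℕ) : power a m ≤ power b m := by
  rcases eq_or_lt_of_le hab with rfl | hlt
  · exact le_rfl
  rcases Nat.eq_zero_or_pos m with rfl | hm
  · simp [power_zero]
  obtain ⟨m, rfl⟩ := Nat.exists_eq_add_of_le hm
  apply le_of_lt
  rw [power_add, power_add, power_one, power_one]
  exact lex_append h hlt _ _

lemma selfMinimal_power [LinearOrder α] {l : List α} (hl : SelfMinimal l) (m : ℕ) :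
    SelfMinimal (power l m) := by
  rcases eq_or_ne l [] with rfl | h
  · rw [SelfMinimal, power_nil]; simp [minrot, rot_nil]
  rcases Nat.eq_zero_or_pos m with rfl | hm
  · rw [SelfMinimal, power_zero]; simp [minrot]
  refine le_antisymm (minrot_le_self _) ?_
  obtain ⟨c, hc⟩ := exists_minrot_eq_rot (power l m)
  rw [hc, rot_power_mod, rot_power_lt l m hm (Nat.mod_lt _ (List.length_pos_iff.2 h))]
  have h2 : l ≤ rot l (c % l.length) := by
    have := minrot_le_rot l (c % l.length); rwa [hl] at this
  exact power_le_power (length_rot l _).symm h2 m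

/- ### commuting words -/

lemma comm_exists : ∀ (N : ℕ) (u v : List α), u.length + v.length ≤ N →
    u ++ v = v ++ u → ∃ t p q, u = power t p ∧ v = power t q := by
  intro N
  induction N with
  | zero =>
    intro u v hN _
    have hu : u = [] := List.eq_nil_of_length_eq_zero (by omega)
    have hv : v = [] := List.eq_nil_of_length_eq_zero (by omega)
    exact ⟨[], 0, 0, by simp [hu, power_zero], by simp [hv, power_zero]⟩
  | succ N ih =>
    intro u v hN hcomm
    rcases eq_or_ne u [] with rfl | hu
    · exact ⟨v, 0, 1, by simp [power_zero], by simp [power_one]⟩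
    rcases eq_or_ne v [] with rfl | hv
    · exact ⟨u, 1, 0, by simp [power_one], by simp [power_zero]⟩
    rcases le_total u.length v.length with hle | hle
    · -- u is a prefix of v
      have htake : v.take u.length = u := by
        have := congrArg (List.take u.length) hcomm
        rw [List.take_left, List.take_append_of_le_length hle] at this
        exact this.symm
      set v' := v.drop u.length with hv'
      have hvdec : v = u ++ v' := by rw [← htake, hv', List.take_append_drop]
      have hcomm' : u ++ v' = v' ++ u := by
        apply List.append_cancel_left (as := u)
        rw [← hvdec, hcomm, hvdec, List.append_assoc]
      have hlen : u.length + v'.length ≤ N := by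
        have h1 : v'.length = v.length - u.length := by simp [hv']
        have h2 : 0 < u.length := List.length_pos_iff.2 hu
        omega
      obtain ⟨t, p, q, htp, htq⟩ := ih u v' hlen hcomm'
      exact ⟨t, p, p + q, htp, by rw [hvdec, htp, htq, ← power_add]⟩
    · have htake : u.take v.length = v := by
        have := congrArg (List.take v.length) hcomm
        rw [List.take_left, List.take_append_of_le_length hle] at this
        exact this
      set u' := u.drop v.length with hu'
      have hudec : u = v ++ u' := by rw [← htake, hu', List.take_append_drop]
      have hcomm' : v ++ u' = u' ++ v := by
        apply List.append_cancel_left (as := v)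
        rw [← hudec, ← hcomm, hudec, List.append_assoc]
      have hlen : v.length + u'.length ≤ N := by
        have h1 : u'.length = u.length - v.length := by simp [hu']
        have h2 : 0 < v.length := List.length_pos_iff.2 hv
        omega
      obtain ⟨t, p, q, htp, htq⟩ := ih v u' hlen hcomm'
      exact ⟨t, p + q, p, by rw [hudec, htp, htq, ← power_add], htp⟩

lemma take_power (t : List α) : ∀ (j s : ℕ), j ≤ s →
    (power t s).take (j * t.length) = power t j := by
  intro j
  induction j with
  | zero => intro s _; simp [power_zero]
  | succ j ih =>
    intro s hs
    obtain ⟨s', rfl⟩ : ∃ s', s = s' + 1 := ⟨s - 1, by omega⟩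
    rw [power_succ, Nat.succ_mul, Nat.add_comm (j * t.length) t.length, List.take_add,
      List.take_left, List.drop_left, ih s' (by omega), ← power_succ]

/- ### fixed rotations -/

lemma rot_fixed_mul {w : List α} {a : ℕ} (ha : rot w a = w) (q : ℕ) :
    rot w (a * q) = w := by
  induction q with
  | zero => simpa using rot_zero w
  | succ q ih => rw [Nat.mul_succ, ← rot_rot, ih, ha]

lemma rot_fixed_gcd {w : List α} : ∀ {a b : ℕ}, rot w a = w → rot w b = w →
    rot w (Nat.gcd a b) = w := by
  intro a b
  induction a, b using Nat.gcd.induction with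
  | H0 n => intro _ hb; simpa using hb
  | H1 m n hm ih =>
    intro ha hb
    rw [Nat.gcd_rec]
    apply ih _ ha
    have : rot w (m * (n / m) + n % m) = w := by rw [Nat.div_add_mod] at *; exact hb
    rw [← rot_rot, rot_fixed_mul ha] at this
    exact this

/- ### primitivity: fixed small rotations are trivial -/

lemma rot_power_fix_eq_zero {l : List α} (hprim : Primitive l) (hne : l ≠ [])
    {m : ℕ} (hm : 1 ≤ m) {c : ℕ} (hc : c < l.length)
    (hfix : rot (power l m) c = power l m) : c = 0 := by
  by_contra hc0
  set w := power l m with hw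
  have hdpos : 0 < l.length := List.length_pos_iff.2 hne
  have hwlen : w.length = m * l.length := length_power l m
  have hdn : l.length ≤ w.length := by rw [hwlen]; exact Nat.le_mul_of_pos_left _ hm
  have hFd : rot w l.length = w := rot_power_dvd l m dvd_rfl
  set g := Nat.gcd c l.length with hgdef
  have hgfix : rot w g = w := rot_fixed_gcd hfix hFd
  have hgpos : 0 < g := Nat.gcd_pos_of_pos_left _ (Nat.pos_of_ne_zero hc0)
  have hgd : g ∣ l.length := Nat.gcd_dvd_right _ _
  have hgc : g ≤ c := Nat.le_of_dvd (Nat.pos_of_ne_zero hc0) (Nat.gcd_dvd_left _ _)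
  have hglt : g < l.length := lt_of_le_of_lt hgc hc
  have hgn : g < w.length := lt_of_lt_of_le hglt hdn
  set u := w.take g with hu
  set v := w.drop g with hv
  have huv : u ++ v = w := List.take_append_drop _ _
  have hvu : v ++ u = w := by
    have := hgfix
    rw [rot, Nat.mod_eq_of_lt hgn] at this
    exact this
  obtain ⟨t, p, q, htp, htq⟩ :=
    comm_exists (u.length + v.length) u v le_rfl (huv.trans hvu.symm)
  have hul : u.length = g := by
    rw [hu, List.length_take]; exact min_eq_left (le_of_lt hgn)
  have hgpt : g = p * t.length := by rw [← hul, htp, length_power]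
  have htne : t ≠ [] := by
    rintro rfl
    simp at hgpt
    omega
  have htlen : 0 < t.length := List.length_pos_iff.2 htne
  have hppos : 0 < p := by
    rcases Nat.eq_zero_or_pos p with rfl | h
    · omega
    · exact h
  have htg : t.length ∣ g := ⟨p, by rw [hgpt, Nat.mul_comm]⟩
  have htd : t.length ∣ l.length := dvd_trans htg hgd
  have hwts : w = power t (p + q) := by rw [← huv, htp, htq, ← power_add]
  have hnts : w.length = (p + q) * t.length := by rw [hwts, length_power]
  set j0 := l.length / t.length with hj0
  have hj0d : j0 * t.length = l.length := Nat.div_mul_cancel htd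
  have hj0s : j0 ≤ p + q := by
    have h1 : j0 ≤ w.length / t.length := Nat.div_le_div_right hdn
    rwa [hnts, Nat.mul_div_cancel _ htlen] at h1
  have hlw : w.take l.length = l := by
    obtain ⟨m', rfl⟩ := Nat.exists_eq_add_of_le hm
    have : w = l ++ power l m' := by rw [hw, power_add, power_one]
    rw [this, List.take_left]
  have hltj : l = power t j0 := by
    rw [← hlw, hwts, ← hj0d, take_power t j0 (p + q) hj0s]
  have hj0pos : 0 < j0 := Nat.div_pos (Nat.le_of_dvd hdpos htd) htlen
  have := hprim t j0 hj0pos hltj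
  have : t.length = l.length := by rw [this]
  have htle : t.length ≤ g := by
    rw [hgpt]; exact Nat.le_mul_of_pos_left _ hppos
  omega

lemma rot_power_injOn [LinearOrder α] {l : List α} (hl : IsLyndon l) {m : ℕ} (hm : 1 ≤ m) :
    ∀ i < l.length, ∀ j < l.length,
      rot (power l m) i = rot (power l m) j → i = j := by
  obtain ⟨hne, hprim, _⟩ := hl
  have key : ∀ i j, i ≤ j → j < l.length →
      rot (power l m) i = rot (power l m) j → i = j := by
    intro i j hij hj heq
    set w := power l m with hw
    have hdn : l.length ≤ w.length := by
      rw [hw, length_power]; exact Nat.le_mul_of_pos_left _ hm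
    have hin : i ≤ w.length := le_trans (le_of_lt (lt_of_le_of_lt hij hj)) hdn
    have e1 : rot (rot w i) (w.length - i) = w := by
      rw [rot_rot, Nat.add_sub_cancel' hin]
      exact rot_length_dvd w dvd_rfl
    have e2 : rot (rot w j) (w.length - i) = rot w (j - i) := by
      rw [rot_rot]
      have hji : j + (w.length - i) = w.length + (j - i) := by omega
      rw [hji]
      exact rot_congr w (by rw [Nat.add_mod_left])
    have hfix : rot w (j - i) = w := by rw [← e2, ← heq, e1]
    have : j - i = 0 :=
      rot_power_fix_eq_zero hprim hne hm (by omega) hfix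
    omega
  intro i hi j hj heq
  rcases le_total i j with h | h
  · exact key i j h hj heq
  · exact (key j i h hi heq.symm).symm


/-- For `n ≥ 1` and a Lyndon word `λ` of length `d` dividing `n`, exactly `d` words
`x` of length `n` satisfy `minrot(x) = λ^(n/d)`. -/
theorem stmt_17 [LinearOrder α] [Fintype α] [Nonempty α]
    (n d : ℕ) (hn : 1 ≤ n) (l : List α) (hl : IsLyndon l)
    (hld : l.length = d) (hd : d ∣ n) :
    {x : List α | x.length = n ∧ minrot x = power l (n / d)}.ncard = d := by
  subst hld
  obtain ⟨hne, hprim, hsm⟩ := hl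
  set m := n / l.length with hm
  have hdpos : 0 < l.length := List.length_pos_iff.2 hne
  have hn' : n = m * l.length := (Nat.div_mul_cancel hd).symm
  have hm1 : 1 ≤ m := by
    rcases Nat.eq_zero_or_pos m with h | h
    · rw [h, Nat.zero_mul] at hn'; omega
    · exact h
  set w := power l m with hw
  have hwlen : w.length = n := by rw [hw, length_power, hn']
  have hsmw : minrot w = w := selfMinimal_power hsm m
  have hset : {x : List α | x.length = n ∧ minrot x = w} = rot w '' (Set.Iio l.length) := by
    ext x
    constructor
    · rintro ⟨hx1, hx2⟩
      obtain ⟨c, hc⟩ := exists_minrot_eq_rot x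
      rw [hx2] at hc
      obtain ⟨b, hb⟩ := exists_rot_inv x c
      rw [← hc] at hb
      refine ⟨b % l.length, Nat.mod_lt _ hdpos, ?_⟩
      rw [hw, ← rot_power_mod l m b, ← hw]
      exact hb
    · rintro ⟨c, hc, rfl⟩
      exact ⟨by rw [length_rot, hwlen], by rw [minrot_rot, hsmw]⟩
  rw [hset, Set.ncard_image_of_injOn, ← Finset.coe_range, Set.ncard_coe_finset,
    Finset.card_range]
  intro i hi j hj hij
  exact rot_power_injOn ⟨hne, hprim, hsm⟩ hm1 i hi j hj hij


end Lyndon
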